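/- arXiv:1906.11345 — 3 statements merged into one kernel-verified Lean document; each statement's English description precedes it below -/
import Mathlib

section
/- Suppose F : ℝ³ → ℝ is a C¹ function of (y₁, x₂, y₂) on a domain where y₁ > 0, satisfying the three equations (i) 2y₁ ∂F/∂y₁ − x₂ ∂F/∂x₂ − y₂ ∂F/∂y₂ − F = 0, (ii) −y₁² y₂ + (x₂ y₁ − F) ∂F/∂y₂ = 0 (after simplification using (i),(iii)), and (iii) ∂F/∂x₂ = y₁. Then there exists a real constant α such that (F − x₂ y₁)² + y₁² y₂² = α y₁ identically on the domain. -/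
lemma clm_decomp (L : ℝ × ℝ × ℝ →L[ℝ] ℝ) (v : ℝ × ℝ × ℝ) :
    L v = v.1 * L (1, 0, 0) + v.2.1 * L (0, 1, 0) + v.2.2 * L (0, 0, 1) := by
  have hv : v = v.1 • ((1:ℝ), (0:ℝ), (0:ℝ)) + v.2.1 • ((0:ℝ), (1:ℝ), (0:ℝ))
      + v.2.2 • ((0:ℝ), (0:ℝ), (1:ℝ)) := by
    refine Prod.ext ?_ (Prod.ext ?_ ?_) <;> simp
  nth_rewrite 1 [hv]
  simp only [map_add, map_smul, smul_eq_mul]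

/-- if a C¹ function F(y₁,x₂,y₂) on a connected open set where y₁ > 0
satisfies (i) 2y₁ F_{y₁} − x₂ F_{x₂} − y₂ F_{y₂} − F = 0, (ii) −y₁²y₂ + (x₂y₁−F) F_{y₂} = 0,
(iii) F_{x₂} = y₁, then (F − x₂y₁)² + y₁²y₂² = α y₁ for some real constant α. -/
theorem stmt4 (S : Set (ℝ × ℝ × ℝ)) (hopen : IsOpen S) (hconn : IsConnected S)
    (hpos : ∀ p ∈ S, 0 < p.1)
    (F : ℝ × ℝ × ℝ → ℝ) (hF : ContDiffOn ℝ 1 F S)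
    (h1 : ∀ p ∈ S, 2 * p.1 * fderiv ℝ F p (1, 0, 0) - p.2.1 * fderiv ℝ F p (0, 1, 0)
        - p.2.2 * fderiv ℝ F p (0, 0, 1) - F p = 0)
    (h2 : ∀ p ∈ S, -(p.1^2 * p.2.2) + (p.2.1 * p.1 - F p) * fderiv ℝ F p (0, 0, 1) = 0)
    (h3 : ∀ p ∈ S, fderiv ℝ F p (0, 1, 0) = p.1) :
    ∃ α : ℝ, ∀ p ∈ S, (F p - p.2.1 * p.1)^2 + p.1^2 * p.2.2^2 = α * p.1 := by
  set g : ℝ × ℝ × ℝ → ℝ := fun q => ((F q - q.2.1 * q.1) * (F q - q.2.1 * q.1)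
    + (q.1 * q.1) * (q.2.2 * q.2.2)) * (q.1)⁻¹ with hg_def
  -- g has zero derivative at every point of S
  have key : ∀ p ∈ S, HasFDerivAt g (0 : ℝ × ℝ × ℝ →L[ℝ] ℝ) p := by
    intro p hp
    have hne : p.1 ≠ 0 := ne_of_gt (hpos p hp)
    have hFd : HasFDerivAt F (fderiv ℝ F p) p :=
      (((hF.differentiableOn one_ne_zero) p hp).differentiableAt
        (hopen.mem_nhds hp)).hasFDerivAt
    have hfst : HasFDerivAt (fun q : ℝ × ℝ × ℝ => q.1)
        (ContinuousLinearMap.fst ℝ ℝ (ℝ × ℝ)) p := hasFDerivAt_fst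
    have hx2 : HasFDerivAt (fun q : ℝ × ℝ × ℝ => q.2.1)
        ((ContinuousLinearMap.fst ℝ ℝ ℝ).comp (ContinuousLinearMap.snd ℝ ℝ (ℝ × ℝ))) p :=
      hasFDerivAt_fst.comp p hasFDerivAt_snd
    have hy2 : HasFDerivAt (fun q : ℝ × ℝ × ℝ => q.2.2)
        ((ContinuousLinearMap.snd ℝ ℝ ℝ).comp (ContinuousLinearMap.snd ℝ ℝ (ℝ × ℝ))) p :=
      hasFDerivAt_snd.comp p hasFDerivAt_snd
    have hinv : HasFDerivAt (fun q : ℝ × ℝ × ℝ => (q.1)⁻¹)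
        (((ContinuousLinearMap.smulRight (1 : ℝ →L[ℝ] ℝ) (-(p.1 ^ 2)⁻¹))).comp
          (ContinuousLinearMap.fst ℝ ℝ (ℝ × ℝ))) p :=
      (hasFDerivAt_inv hne).comp p hasFDerivAt_fst
    have hnum := ((hFd.sub (hx2.mul hfst)).mul (hFd.sub (hx2.mul hfst))).add
      ((hfst.mul hfst).mul (hy2.mul hy2))
    have hD := hnum.mul hinv
    refine hD.congr_fderiv (ContinuousLinearMap.ext fun v => ?_).symm
    have hdec := clm_decomp (fderiv ℝ F p) v
    have e1 := h1 p hp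
    have e2 := h2 p hp
    have e3 := h3 p hp
    simp only [ContinuousLinearMap.sub_apply, ContinuousLinearMap.add_apply,
      ContinuousLinearMap.smul_apply, ContinuousLinearMap.coe_comp', Function.comp_apply,
      ContinuousLinearMap.coe_fst', ContinuousLinearMap.coe_snd', smul_eq_mul,
      ContinuousLinearMap.zero_apply, ContinuousLinearMap.smulRight_apply,
      ContinuousLinearMap.one_apply, Pi.mul_apply, Pi.sub_apply, Pi.add_apply]
    rw [hdec, e3]
    rw [e3] at e1
    set a := fderiv ℝ F p (1, 0, 0)
    set c := fderiv ℝ F p (0, 0, 1)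
    field_simp
    linear_combination (-(F p - p.2.1 * p.1) * v.1) * e1
      + (2 * v.2.2 * p.1 + v.1 * p.2.2) * e2
  -- g is locally constant on S
  have hloc : ∀ p ∈ S, ∃ ε > 0, Metric.ball p ε ⊆ S ∧ ∀ q ∈ Metric.ball p ε, g q = g p := by
    intro p hp
    obtain ⟨ε, hε, hball⟩ := Metric.isOpen_iff.1 hopen p hp
    refine ⟨ε, hε, hball, fun q hq => ?_⟩
    have hconv : Convex ℝ (Metric.ball p ε) := convex_ball p ε
    have hdiff : DifferentiableOn ℝ g (Metric.ball p ε) := fun x hx =>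
      ((key x (hball hx)).differentiableAt).differentiableWithinAt
    refine hconv.is_const_of_fderivWithin_eq_zero hdiff (fun x hx => ?_) hq
      (Metric.mem_ball_self hε)
    rw [fderivWithin_of_isOpen Metric.isOpen_ball hx]
    exact (key x (hball hx)).fderiv
  -- locally constant on connected set ⇒ constant
  obtain ⟨p₀, hp₀⟩ := hconn.nonempty
  have hconst : ∀ p ∈ S, g p = g p₀ := by
    intro p hp
    set T : Set (ℝ × ℝ × ℝ) := {q | q ∈ S ∧ g q = g p₀} with hT
    set U : Set (ℝ × ℝ × ℝ) := {q | q ∈ S ∧ g q ≠ g p₀} with hU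
    have hTopen : IsOpen T := by
      rw [Metric.isOpen_iff]
      rintro q ⟨hqS, hq⟩
      obtain ⟨ε, hε, hbS, hconstb⟩ := hloc q hqS
      exact ⟨ε, hε, fun r hr => ⟨hbS hr, (hconstb r hr).trans hq⟩⟩
    have hUopen : IsOpen U := by
      rw [Metric.isOpen_iff]
      rintro q ⟨hqS, hq⟩
      obtain ⟨ε, hε, hbS, hconstb⟩ := hloc q hqS
      exact ⟨ε, hε, fun r hr => ⟨hbS hr, (hconstb r hr).symm ▸ hq⟩⟩
    by_contra hne
    have hcover : S ⊆ T ∪ U := fun q hq => by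
      by_cases h : g q = g p₀
      · exact Or.inl ⟨hq, h⟩
      · exact Or.inr ⟨hq, h⟩
    have := hconn.isPreconnected T U hTopen hUopen hcover
      ⟨p₀, hp₀, hp₀, rfl⟩ ⟨p, hp, hp, hne⟩
    obtain ⟨q, _, ⟨_, hq1⟩, ⟨_, hq2⟩⟩ := this
    exact hq2 hq1
  refine ⟨g p₀, fun p hp => ?_⟩
  have hgp := hconst p hp
  have hne : p.1 ≠ 0 := ne_of_gt (hpos p hp)
  rw [hg_def] at hgp
  simp only at hgp
  rw [mul_inv_eq_iff_eq_mul₀ hne] at hgp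
  linear_combination hgp
end

section
/- Let G : ℝ² → ℝ be C¹ on a connected open set where y₁ > 0 and G ≠ 0, satisfying G·∂G/∂y₂ + y₁² y₂ = 0 and 2y₁ ∂G/∂y₁ − y₂ ∂G/∂y₂ − G = 0. Then there is a real constant α with G(y₁, y₂)² = α y₁ − y₁² y₂² on that set. -/
/-- if G(y₁,y₂) is C¹ on a connected open set where y₁ > 0 and G ≠ 0, and
G·G_{y₂} + y₁²y₂ = 0 and 2y₁G_{y₁} − y₂G_{y₂} − G = 0, then G² = αy₁ − y₁²y₂² for some
real constant α. -/
theorem stmt6 (S : Set (ℝ × ℝ)) (hopen : IsOpen S) (hconn : IsConnected S)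
    (hpos : ∀ p ∈ S, 0 < p.1)
    (G : ℝ × ℝ → ℝ) (hG : ContDiffOn ℝ 1 G S) (hne : ∀ p ∈ S, G p ≠ 0)
    (h1 : ∀ p ∈ S, G p * fderiv ℝ G p (0, 1) + p.1^2 * p.2 = 0)
    (h2 : ∀ p ∈ S, 2 * p.1 * fderiv ℝ G p (1, 0) - p.2 * fderiv ℝ G p (0, 1) - G p = 0) :
    ∃ α : ℝ, ∀ p ∈ S, (G p)^2 = α * p.1 - p.1^2 * p.2^2 := by
  set H : ℝ × ℝ → ℝ := fun q => (G q * G q + q.1 * q.1 * (q.2 * q.2)) * (q.1)⁻¹ with hHdef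
  -- key: H has zero derivative on S
  have key : ∀ p ∈ S, HasFDerivAt H (0 : ℝ × ℝ →L[ℝ] ℝ) p := by
    intro p hp
    have hp1 : 0 < p.1 := hpos p hp
    have hp1ne : p.1 ≠ 0 := ne_of_gt hp1
    have hd : DifferentiableAt ℝ G p :=
      ((hG.contDiffAt (hopen.mem_nhds hp)).differentiableAt one_ne_zero)
    set D := fderiv ℝ G p with hD
    have hGD : HasFDerivAt G D p := hd.hasFDerivAt
    have hfst : HasFDerivAt (fun q : ℝ × ℝ => q.1) (ContinuousLinearMap.fst ℝ ℝ ℝ) p :=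
      hasFDerivAt_fst
    have hsnd : HasFDerivAt (fun q : ℝ × ℝ => q.2) (ContinuousLinearMap.snd ℝ ℝ ℝ) p :=
      hasFDerivAt_snd
    have hinv : HasFDerivAt (fun q : ℝ × ℝ => (q.1)⁻¹)
        ((-(p.1 ^ 2)⁻¹) • ContinuousLinearMap.fst ℝ ℝ ℝ) p :=
      (hasDerivAt_inv hp1ne).comp_hasFDerivAt p hfst
    have hnum := (hGD.mul hGD).add ((hfst.mul hfst).mul (hsnd.mul hsnd))
    have hH := hnum.mul hinv
    have h1p := h1 p hp
    have h2p := h2 p hp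
    have h0 : (G p * G p + p.1 * p.1 * (p.2 * p.2)) • (-(p.1 ^ 2)⁻¹ • ContinuousLinearMap.fst ℝ ℝ ℝ) +
        p.1⁻¹ • (G p • D + G p • D +
          ((p.1 * p.1) • (p.2 • ContinuousLinearMap.snd ℝ ℝ ℝ + p.2 • ContinuousLinearMap.snd ℝ ℝ ℝ) +
            (p.2 * p.2) • (p.1 • ContinuousLinearMap.fst ℝ ℝ ℝ + p.1 • ContinuousLinearMap.fst ℝ ℝ ℝ))) =
        (0 : ℝ × ℝ →L[ℝ] ℝ) := by
      refine ContinuousLinearMap.ext fun v => ?_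
      have hv : v = v.1 • ((1 : ℝ), (0 : ℝ)) + v.2 • ((0 : ℝ), (1 : ℝ)) := by ext <;> simp
      have hDv : D v = v.1 * D (1, 0) + v.2 * D (0, 1) := by
        calc D v = D (v.1 • ((1 : ℝ), (0 : ℝ)) + v.2 • ((0 : ℝ), (1 : ℝ))) := by rw [← hv]
        _ = v.1 * D (1, 0) + v.2 * D (0, 1) := by
            rw [map_add, map_smul, map_smul]; simp [smul_eq_mul]
      simp only [ContinuousLinearMap.add_apply, ContinuousLinearMap.smul_apply,
        ContinuousLinearMap.coe_fst', ContinuousLinearMap.coe_snd', smul_eq_mul,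
        ContinuousLinearMap.zero_apply, hDv]
      have e1 : G p * D (0, 1) = -(p.1 ^ 2 * p.2) := by rw [hD]; linarith
      have e2 : 2 * p.1 * D (1, 0) = p.2 * D (0, 1) + G p := by rw [hD]; linarith
      field_simp
      linear_combination (2 * v.2 * p.1 + v.1 * p.2) * e1 +
        (v.1 * G p) * e2
    exact h0 ▸ hH
  obtain ⟨p₀, hp₀⟩ := hconn.nonempty
  refine ⟨H p₀, ?_⟩
  set u : Set (ℝ × ℝ) := {p | p ∈ S ∧ H p = H p₀} with hu
  have hCont : ∀ p ∈ S, ContinuousAt H p := fun p hp => (key p hp).differentiableAt.continuousAt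
  have huopen : IsOpen u := by
    rw [Metric.isOpen_iff]
    rintro p ⟨hpS, hpH⟩
    obtain ⟨ε, hε, hball⟩ := Metric.isOpen_iff.1 hopen p hpS
    refine ⟨ε, hε, fun q hq => ⟨hball hq, ?_⟩⟩
    have hdiff : DifferentiableOn ℝ H (Metric.ball p ε) := fun z hz =>
      ((key z (hball hz)).differentiableAt).differentiableWithinAt
    have hzero : ∀ z ∈ Metric.ball p ε, fderivWithin ℝ H (Metric.ball p ε) z = 0 := by
      intro z hz
      rw [fderivWithin_of_isOpen Metric.isOpen_ball hz]
      exact (key z (hball hz)).fderiv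
    have := (convex_ball p ε).is_const_of_fderivWithin_eq_zero hdiff hzero hq
      (Metric.mem_ball_self hε)
    rw [this, hpH]
  have hsub : S ⊆ u := by
    refine hconn.isPreconnected.subset_of_closure_inter_subset huopen ⟨p₀, hp₀, hp₀, rfl⟩ ?_
    rintro x ⟨hxc, hxS⟩
    refine ⟨hxS, ?_⟩
    have hcw : ContinuousWithinAt H u x := (hCont x hxS).continuousWithinAt
    have := hcw.mem_closure_image hxc
    have himg : H '' u ⊆ {H p₀} := by rintro y ⟨z, hz, rfl⟩; exact hz.2
    have : H x ∈ closure ({H p₀} : Set ℝ) := closure_mono himg this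
    simpa using this
  intro p hp
  have hHp : H p = H p₀ := (hsub hp).2
  have hp1 : 0 < p.1 := hpos p hp
  have hp1ne : p.1 ≠ 0 := ne_of_gt hp1
  have : (G p * G p + p.1 * p.1 * (p.2 * p.2)) * (p.1)⁻¹ = H p₀ := hHp
  field_simp at this
  nlinarith [this]
end

section
/- Let X₁ = z₁² ∂/∂z₁ + C z₃ ∂/∂z₂ − 2B z₁ z₃ ∂/∂z₃, X₂ = −z₁ ∂/∂z₁ + B z₃ ∂/∂z₃, X₃ = ∂/∂z₁, X₄ = ∂/∂z₂, X₅ = z₂ ∂/∂z₂ + z₃ ∂/∂z₃ be holomorphic vector fields on ℂ³, where B, C are complex constants. Then the relations [X₁,X₂] = X₁, [X₁,X₃] = 2X₂, [X₂,X₃] = X₃, [X₄,X₅] = X₄, and [X₁,X₄] = [X₁,X₅] = [X₂,X₄] = [X₂,X₅] = [X₃,X₄] = [X₃,X₅] = 0 all hold if and only if C(B+1) = 0. -/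
open Complex

abbrev VF := (Fin 3 → ℂ) → (Fin 3 → ℂ)

noncomputable def vbracket (X Y : VF) : VF :=
  fun z j => ∑ k, (X z k * fderiv ℂ (fun w => Y w j) z (Pi.single k 1)
      - Y z k * fderiv ℂ (fun w => X w j) z (Pi.single k 1))

lemma hproj (i : Fin 3) (z : Fin 3 → ℂ) :
    HasFDerivAt (fun w : Fin 3 → ℂ => w i)
      (ContinuousLinearMap.proj (R := ℂ) (φ := fun _ : Fin 3 => ℂ) i) z :=
  hasFDerivAt_apply i z

@[simp] lemma fd_coord (i : Fin 3) (z v : Fin 3 → ℂ) :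
    fderiv ℂ (fun w : Fin 3 → ℂ => w i) z v = v i := by
  rw [(hproj i z).fderiv]; rfl

@[simp] lemma fd_pow (z v : Fin 3 → ℂ) :
    fderiv ℂ (fun w : Fin 3 → ℂ => (w 0)^2) z v = 2 * z 0 * v 0 := by
  have : (fun w : Fin 3 → ℂ => (w 0)^2) = fun w => w 0 * w 0 := by funext w; ring
  rw [this, (show HasFDerivAt (fun w : Fin 3 → ℂ => w 0 * w 0) _ z from (hproj 0 z).mul (hproj 0 z)).fderiv]
  simp; ring

@[simp] lemma fd_cmul (c : ℂ) (i : Fin 3) (z v : Fin 3 → ℂ) :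
    fderiv ℂ (fun w : Fin 3 → ℂ => c * w i) z v = c * v i := by
  rw [((hproj i z).const_mul c).fderiv]; simp

@[simp] lemma fd_mul2 (c : ℂ) (z v : Fin 3 → ℂ) :
    fderiv ℂ (fun w : Fin 3 → ℂ => c * w 0 * w 2) z v = c * v 0 * z 2 + c * z 0 * v 2 := by
  rw [(show HasFDerivAt (fun w : Fin 3 → ℂ => c * w 0 * w 2) _ z from ((hproj 0 z).const_mul c).mul (hproj 2 z)).fderiv]
  simp; ring

@[simp] lemma fd_neg (z v : Fin 3 → ℂ) :
    fderiv ℂ (fun w : Fin 3 → ℂ => -(w 0)) z v = -(v 0) := by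
  rw [(show HasFDerivAt (fun w : Fin 3 → ℂ => -(w 0)) _ z from (hproj 0 z).neg).fderiv]; rfl

/-- the fields X₁ = z₁²∂₁ + Cz₃∂₂ − 2Bz₁z₃∂₃, X₂ = −z₁∂₁ + Bz₃∂₃, X₃ = ∂₁,
X₄ = ∂₂, X₅ = z₂∂₂ + z₃∂₃ satisfy the su(1,1)⊕g₂ relations [X₁,X₂]=X₁, [X₁,X₃]=2X₂,
[X₂,X₃]=X₃, [X₄,X₅]=X₄ with all remaining brackets zero, iff C(B+1) = 0. -/
theorem stmt9 (B C : ℂ) :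
    let X1 : VF := fun z => ![(z 0)^2, C * z 2, -2 * B * z 0 * z 2]
    let X2 : VF := fun z => ![-(z 0), 0, B * z 2]
    let X3 : VF := fun _ => ![1, 0, 0]
    let X4 : VF := fun _ => ![0, 1, 0]
    let X5 : VF := fun z => ![0, z 1, z 2]
    (vbracket X1 X2 = X1 ∧
     vbracket X1 X3 = (fun z => (2:ℂ) • X2 z) ∧
     vbracket X2 X3 = X3 ∧
     vbracket X4 X5 = X4 ∧
     vbracket X1 X4 = 0 ∧
     vbracket X1 X5 = 0 ∧
     vbracket X2 X4 = 0 ∧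
     vbracket X2 X5 = 0 ∧
     vbracket X3 X4 = 0 ∧
     vbracket X3 X5 = 0) ↔ C * (B + 1) = 0 := by
  intro X1 X2 X3 X4 X5
  constructor
  · rintro ⟨h1, -⟩
    have := congrFun (congrFun h1 ![0, 0, 1]) 1
    simp only [X1, X2, vbracket, Fin.sum_univ_three, Matrix.cons_val_zero, Matrix.cons_val_one,
      Matrix.head_cons, Matrix.cons_val_two, Matrix.tail_cons, fd_pow, fd_cmul, fd_mul2, fd_neg,
      fd_coord] at this
    simp [Pi.single_apply] at this
    linear_combination -this
  · intro h
    have key : C * B = -C := by linear_combination h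
    refine ⟨?_, ?_, ?_, ?_, ?_, ?_, ?_, ?_, ?_, ?_⟩ <;>
    · funext z j
      fin_cases j <;>
      · simp only [X1, X2, X3, X4, X5, vbracket, Fin.sum_univ_three, Matrix.cons_val_zero,
          Matrix.cons_val_one, Matrix.head_cons, Matrix.cons_val_two, Matrix.tail_cons,
          fd_pow, fd_cmul, fd_mul2, fd_neg, fd_coord, fderiv_const, Pi.zero_apply,
          ContinuousLinearMap.zero_apply, smul_eq_mul, Fin.isValue]
        simp [Pi.single_apply]
        all_goals try ring
        all_goals linear_combination (-(z 2)) * key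
end
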